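/- Let p₁, p₂ be positive integers, d := gcd(p₁, p₂), and let s be a positive integer dividing p₁p₂/d. Assume d > 2, s > 2, and that d ≠ 4 or s ≠ 4. Then there exist integers v₁, v₂ such that v₁·p₂ + v₂·p₁ = p₁·p₂/s, p₁ does not divide 2v₁, and p₂ does not divide 2v₂. -/
import Mathlib


/-- Key arithmetic claim in the proof of Proposition 5.7: there are integers `v₁, v₂` with
`v₁ p₂ + v₂ p₁ = p₁ p₂ / s`, `p₁ ∤ 2v₁` and `p₂ ∤ 2v₂`. -/
theorem stmt_8 (p₁ p₂ s : ℕ) (hp₁ : 0 < p₁) (hp₂ : 0 < p₂) (hs0 : 0 < s)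
    (hsdvd : s ∣ p₁ * p₂ / Nat.gcd p₁ p₂)
    (hd : 2 < Nat.gcd p₁ p₂) (hs : 2 < s)
    (h4 : Nat.gcd p₁ p₂ ≠ 4 ∨ s ≠ 4) :
    ∃ v₁ v₂ : ℤ,
      v₁ * p₂ + v₂ * p₁ = ((p₁ * p₂ / s : ℕ) : ℤ) ∧
      ¬ ((p₁ : ℤ) ∣ 2 * v₁) ∧ ¬ ((p₂ : ℤ) ∣ 2 * v₂) := by
  set d := Nat.gcd p₁ p₂ with hd_def
  set a := p₁ / d with ha_def
  set b := p₂ / d with hb_def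
  have hd0 : 0 < d := Nat.gcd_pos_of_pos_left _ hp₁
  have ha : d * a = p₁ := Nat.mul_div_cancel' (Nat.gcd_dvd_left _ _)
  have hb : d * b = p₂ := Nat.mul_div_cancel' (Nat.gcd_dvd_right _ _)
  have ha0 : 0 < a := by
    rcases Nat.eq_zero_or_pos a with h | h
    · rw [h, Nat.mul_zero] at ha; omega
    · exact h
  have hb0 : 0 < b := by
    rcases Nat.eq_zero_or_pos b with h | h
    · rw [h, Nat.mul_zero] at hb; omega
    · exact h
  have hab : Nat.Coprime a b := Nat.coprime_div_gcd_div_gcd hd0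
  set m := p₁ * p₂ / d / s with hm_def
  have hK : d * (p₁ * p₂ / d) = p₁ * p₂ :=
    Nat.mul_div_cancel' (Dvd.dvd.mul_right (Nat.gcd_dvd_left _ _) _)
  have hsm : s * m = p₁ * p₂ / d := Nat.mul_div_cancel' hsdvd
  have hsm2 : s * m = a * d * b := by
    have h1 : d * (s * m) = d * (a * d * b) := by
      rw [hsm, hK, ← ha, ← hb]; ring
    exact Nat.eq_of_mul_eq_mul_left hd0 h1
  have hN : p₁ * p₂ / s = d * m := by
    have h1 : p₁ * p₂ = s * (d * m) := by rw [← hK, ← hsm]; ring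
    rw [h1, Nat.mul_div_cancel_left _ hs0]
  -- Bezout
  have hcop : IsCoprime (a : ℤ) (b : ℤ) := by
    rw [Int.isCoprime_iff_gcd_eq_one, Int.gcd_natCast_natCast]
    exact hab
  obtain ⟨u, w, huw⟩ := hcop
  set x₀ : ℤ := (m : ℤ) * w with hx₀
  set y₀ : ℤ := (m : ℤ) * u with hy₀
  have hbase : (m : ℤ) = x₀ * b + y₀ * a := by
    rw [hx₀, hy₀]; linear_combination (m : ℤ) * huw.symm
  have hp1Z : (p₁ : ℤ) = (a : ℤ) * d := by rw [← ha]; push_cast; ring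
  have hp2Z : (p₂ : ℤ) = (b : ℤ) * d := by rw [← hb]; push_cast; ring
  clear_value x₀ y₀
  have haZ : (a : ℤ) ≠ 0 := by exact_mod_cast ha0.ne'
  have hbZ : (b : ℤ) ≠ 0 := by exact_mod_cast hb0.ne'
  -- lemma A1
  have lemA1 : ∀ t t' : ℤ, (p₁ : ℤ) ∣ 2 * (x₀ + t * a) → (p₁ : ℤ) ∣ 2 * (x₀ + t' * a) →
      (d : ℤ) ∣ 2 * (t - t') := by
    intro t t' h h'
    have h2 : (p₁ : ℤ) ∣ 2 * (x₀ + t * a) - 2 * (x₀ + t' * a) := dvd_sub h h'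
    have h3 : ((a : ℤ) * d) ∣ (a : ℤ) * (2 * (t - t')) := by
      rw [← hp1Z]; convert h2 using 1; ring
    exact (mul_dvd_mul_iff_left haZ).mp h3
  have lemA2 : ∀ t t' : ℤ, (p₂ : ℤ) ∣ 2 * (y₀ - t * b) → (p₂ : ℤ) ∣ 2 * (y₀ - t' * b) →
      (d : ℤ) ∣ 2 * (t - t') := by
    intro t t' h h'
    have h2 : (p₂ : ℤ) ∣ 2 * (y₀ - t' * b) - 2 * (y₀ - t * b) := dvd_sub h' h
    have h3 : ((b : ℤ) * d) ∣ (b : ℤ) * (2 * (t - t')) := by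
      rw [← hp2Z]; convert h2 using 1; ring
    exact (mul_dvd_mul_iff_left hbZ).mp h3
  have hnd2 : ¬ ((d : ℤ) ∣ 2) := by
    intro h
    have h' : d ∣ 2 := by exact_mod_cast h
    have := Nat.le_of_dvd (by norm_num) h'
    omega
  have hd4' : (d : ℤ) ∣ 4 → d = 4 := by
    intro h
    have h' : d ∣ 4 := by exact_mod_cast h
    have h1 := Nat.le_of_dvd (by norm_num) h'
    have h2 : d = 3 ∨ d = 4 := by omega
    rcases h2 with h2 | h2
    · rw [h2] at h'; norm_num at h'
    · exact h2
  -- lemma D : in case d = 4, both bad sets nonempty is impossible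
  have lemD : d = 4 → ∀ t₁ t₂ : ℤ, (p₁ : ℤ) ∣ 2 * (x₀ + t₁ * a) →
      (p₂ : ℤ) ∣ 2 * (y₀ - t₂ * b) → False := by
    intro hd4 t₁ t₂ h1 h2
    obtain ⟨k, hk⟩ := h1
    obtain ⟨l, hl⟩ := h2
    rw [hp1Z] at hk
    rw [hp2Z] at hl
    rw [hd4] at hk hl
    push_cast at hk hl
    have hk' : x₀ + t₁ * a = 2 * ((a : ℤ) * k) := by
      have h2 : (2:ℤ) * (x₀ + t₁ * a) = 2 * (2 * ((a : ℤ) * k)) := by linear_combination hk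
      exact mul_left_cancel₀ two_ne_zero h2
    have hl' : y₀ - t₂ * b = 2 * ((b : ℤ) * l) := by
      have h2 : (2:ℤ) * (y₀ - t₂ * b) = 2 * (2 * ((b : ℤ) * l)) := by linear_combination hl
      exact mul_left_cancel₀ two_ne_zero h2
    have hm2 : (m : ℤ) = (a : ℤ) * b * (2 * k + 2 * l + (t₂ - t₁)) := by
      linear_combination hbase + (b : ℤ) * hk' + (a : ℤ) * hl'
    have hZ : (s : ℤ) * m = (a : ℤ) * d * b := by exact_mod_cast hsm2
    rw [hd4] at hZ
    push_cast at hZ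
    have habne : (a : ℤ) * b ≠ 0 := mul_ne_zero haZ hbZ
    have hso : ((a : ℤ) * b) * ((s : ℤ) * (2 * k + 2 * l + (t₂ - t₁))) = ((a : ℤ) * b) * 4 := by
      rw [hm2] at hZ; linear_combination hZ
    have hso' : (s : ℤ) * (2 * k + 2 * l + (t₂ - t₁)) = 4 := mul_left_cancel₀ habne hso
    have hs4Z : (s : ℤ) ∣ 4 := ⟨_, hso'.symm⟩
    have hs4 : s ∣ 4 := by exact_mod_cast hs4Z
    have hsle := Nat.le_of_dvd (by norm_num) hs4
    have hseq : s = 3 ∨ s = 4 := by omega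
    rcases hseq with hseq | hseq
    · rw [hseq] at hs4; norm_num at hs4
    · rcases h4 with h | h
      · exact h hd4
      · exact h hseq
  -- main search
  have key : ∃ t : ℤ, ¬ ((p₁ : ℤ) ∣ 2 * (x₀ + t * a)) ∧ ¬ ((p₂ : ℤ) ∣ 2 * (y₀ - t * b)) := by
    by_contra hcon
    have hB : ∀ t : ℤ, (p₁ : ℤ) ∣ 2 * (x₀ + t * a) ∨ (p₂ : ℤ) ∣ 2 * (y₀ - t * b) := by
      intro t
      by_cases h1 : (p₁ : ℤ) ∣ 2 * (x₀ + t * a)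
      · exact Or.inl h1
      by_cases h2 : (p₂ : ℤ) ∣ 2 * (y₀ - t * b)
      · exact Or.inr h2
      exact absurd ⟨t, h1, h2⟩ hcon
    have nm2 : ∀ t t' : ℤ, t - t' = -1 → ¬ ((d:ℤ) ∣ 2 * (t - t')) := by
      intro t t' h hh; rw [h] at hh
      exact hnd2 (by simpa using hh.neg_right)
    rcases hB 0 with h0 | h0 <;> rcases hB 1 with h1 | h1 <;> rcases hB 2 with h2 | h2
    · exact nm2 0 1 (by norm_num) (lemA1 0 1 h0 h1)
    · exact nm2 0 1 (by norm_num) (lemA1 0 1 h0 h1)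
    · -- B₁ 0, B₂ 1, B₁ 2
      have hdd : (d : ℤ) ∣ 4 := by
        have := lemA1 0 2 h0 h2
        norm_num at this
        simpa using this.neg_right
      exact lemD (hd4' hdd) 0 1 h0 h1
    · exact nm2 1 2 (by norm_num) (lemA2 1 2 h1 h2)
    · exact nm2 1 2 (by norm_num) (lemA1 1 2 h1 h2)
    · -- B₂ 0, B₁ 1, B₂ 2
      have hdd : (d : ℤ) ∣ 4 := by
        have := lemA2 0 2 h0 h2
        norm_num at this
        simpa using this.neg_right
      exact lemD (hd4' hdd) 1 0 h1 h0
    · exact nm2 0 1 (by norm_num) (lemA2 0 1 h0 h1)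
    · exact nm2 0 1 (by norm_num) (lemA2 0 1 h0 h1)
  obtain ⟨t, ht1, ht2⟩ := key
  refine ⟨x₀ + t * a, y₀ - t * b, ?_, ?_, ?_⟩
  · rw [hN]
    push_cast
    linear_combination (x₀ + t * a) * hp2Z + (y₀ - t * b) * hp1Z - (d : ℤ) * hbase
  · exact ht1
  · exact ht2
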